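/- Let G be a countably infinite group with a Følner sequence (F_n). If A ⊆ G is (F_n)-normal and B ⊆ G is infinite, then the set BA = {b·a : b ∈ B, a ∈ A} has (F_n)-density 1, i.e., |BA ∩ F_n|/|F_n| → 1. -/

import Mathlib

open Filter

/- `(F n)` is a Følner sequence in the group `G`
(`h ∈ g • F n ↔ g⁻¹ * h ∈ F n`). -/
open scoped Classical in
def IsFolnerGroup {G : Type*} [Group G] (F : ℕ → Finset G) : Prop :=
  (∀ n, (F n).Nonempty) ∧
  ∀ g : G, Tendsto
    (fun n => (((F n).filter (fun h => g⁻¹ * h ∈ F n)).card : ℝ) / (F n).card)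
    atTop (nhds 1)

/- `A ⊆ G` is `(F n)`-normal. -/
open scoped Classical in
def IsNormalSet {G : Type*} [Mul G] (F : ℕ → Finset G) (A : Set G) : Prop :=
  ∀ K : Finset G, K.Nonempty → ∀ B : G → Bool,
    Tendsto
      (fun n =>
        (((F n).filter (fun g => ∀ h ∈ K, (h * g ∈ A ↔ B h = true))).card : ℝ) / (F n).card)
      atTop (nhds ((1 / 2 : ℝ) ^ K.card))

/- Let `G` be a countably infinite group with Følner sequence `(F n)`. If `A ⊆ G` is
`(F n)`-normal and `B ⊆ G` is infinite, then `B A = {b a : b ∈ B, a ∈ A}` has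
`(F n)`-density `1`. -/
open scoped Classical in
theorem BA_density_one
    {G : Type*} [Group G] [Countable G] [Infinite G]
    (F : ℕ → Finset G) (hF : IsFolnerGroup F)
    (A B : Set G) (hA : IsNormalSet F A) (hB : B.Infinite) :
    Tendsto
      (fun n =>
        (((F n).filter (fun g => ∃ b ∈ B, ∃ a ∈ A, g = b * a)).card : ℝ) / (F n).card)
      atTop (nhds 1) := by
  classical
  obtain ⟨hne, _⟩ := hF
  rw [Metric.tendsto_atTop]
  intro ε hε
  obtain ⟨m, hm⟩ := exists_pow_lt_of_lt_one hε (by norm_num : (1/2:ℝ) < 1)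
  obtain ⟨S, hS, hScard⟩ := hB.exists_subset_card_eq (m+1)
  set K := S.image (·⁻¹) with hKdef
  have hKcard : K.card = m+1 := by
    rw [hKdef, Finset.card_image_of_injective _ inv_injective, hScard]
  have hKne : K.Nonempty := by rw [← Finset.card_pos, hKcard]; omega
  have hAK := hA K hKne (fun _ => false)
  rw [Metric.tendsto_atTop] at hAK
  have hpow : ((1/2:ℝ))^K.card < ε := by
    rw [hKcard]
    calc (1/2:ℝ)^(m+1) ≤ (1/2)^m :=
          pow_le_pow_of_le_one (by norm_num) (by norm_num) (by omega)
      _ < ε := hm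
  have hpow0 : (0:ℝ) ≤ ((1/2:ℝ))^K.card := by positivity
  obtain ⟨N, hN⟩ := hAK (ε - (1/2)^K.card) (by linarith)
  refine ⟨N, fun n hn => ?_⟩
  have hc : (0:ℝ) < ((F n).card : ℝ) := by
    exact_mod_cast Finset.card_pos.2 (hne n)
  have h1 := hN n hn
  rw [Real.dist_eq] at h1 ⊢
  set P := fun g : G => ∃ b ∈ B, ∃ a ∈ A, g = b * a with hP
  set Q := fun g : G => ∀ h ∈ K, (h * g ∈ A ↔ (fun _ : G => false) h = true) with hQ
  have hb : (((F n).filter Q).card : ℝ) / (F n).card < ε := by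
    have := abs_lt.1 h1
    have h2 := this.2
    linarith
  have hcover : F n ⊆ (F n).filter P ∪ (F n).filter Q := by
    intro g hg
    by_cases hq : Q g
    · exact Finset.mem_union_right _ (Finset.mem_filter.2 ⟨hg, hq⟩)
    · refine Finset.mem_union_left _ (Finset.mem_filter.2 ⟨hg, ?_⟩)
      simp only [hQ, Bool.false_eq_true, iff_false, not_forall, not_not] at hq
      obtain ⟨h, hhK, hh⟩ := hq
      rw [hKdef] at hhK
      obtain ⟨s, hsS, rfl⟩ := Finset.mem_image.1 hhK
      exact ⟨s, hS hsS, s⁻¹ * g, hh, by group⟩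
  have hsum : ((F n).card : ℝ) ≤ ((F n).filter P).card + ((F n).filter Q).card := by
    have := (Finset.card_le_card hcover).trans (Finset.card_union_le _ _)
    exact_mod_cast this
  have hle : (((F n).filter P).card : ℝ) ≤ (F n).card := by
    exact_mod_cast Finset.card_le_card (Finset.filter_subset _ _)
  have h1le : (((F n).filter P).card : ℝ) / (F n).card ≤ 1 := by
    rw [div_le_one hc]; exact hle
  have hge : 1 - (((F n).filter Q).card : ℝ) / (F n).card
      ≤ (((F n).filter P).card : ℝ) / (F n).card := by
    rw [sub_le_iff_le_add, ← add_div, le_div_iff₀ hc, one_mul]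
    exact hsum
  rw [abs_sub_lt_iff]
  constructor <;> linarith
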